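/- Let G be a digraph, u a vertex, and let P_1, ..., P_i be paths in G each starting at u, where G_1 = G and G_{j+1} is obtained from G_j by reversing the edges of P_j (with P_j a path in G_j). Let S be a vertex set containing u, T = V \ S, and suppose exactly k̃ of the paths P_1, ..., P_i end in T. Then the number of edges from S to T in G_{i+1} equals the number of edges from S to T in G minus k̃. -/

import Mathlib

variable {V : Type*} [DecidableEq V]

/-- The (directed) edges used by a path given as a list of vertices. -/
def pathEdges (l : List V) : List (V × V) := l.zip l.tail

/-- The number of edges of the multigraph `E` going from `S` to its complement. -/
def crossCount (E : Multiset (V × V)) (S : Finset V) : ℕ :=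
  Multiset.countP (fun e => e.1 ∈ S ∧ e.2 ∉ S) E

/-- `l` is a simple (directed) path starting at `u` in the multigraph `E`. -/
def IsSimplePathFrom (E : Multiset (V × V)) (u : V) (l : List V) : Prop :=
  l ≠ [] ∧ l.head? = some u ∧ l.Nodup ∧
    List.Chain' (fun p q => (p, q) ∈ E) l

lemma pathEdges_nil : pathEdges ([] : List V) = [] := rfl
lemma pathEdges_single (a : V) : pathEdges [a] = [] := rfl
lemma pathEdges_cons2 (a b : V) (l : List V) :
    pathEdges (a :: b :: l) = (a, b) :: pathEdges (b :: l) := rfl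

lemma pathEdges_nodup : ∀ {l : List V}, l.Nodup → (pathEdges l).Nodup
  | [], _ => by simp [pathEdges_nil]
  | [a], _ => by simp [pathEdges_single]
  | a :: b :: t, h => by
    rw [pathEdges_cons2]
    refine List.nodup_cons.2 ⟨fun hm => ?_, pathEdges_nodup (List.nodup_cons.1 h).2⟩
    have := (List.of_mem_zip hm).1
    exact (List.nodup_cons.1 h).1 this

lemma pathEdges_mem {R : V → V → Prop} : ∀ {l : List V}, List.Chain' R l →
    ∀ e ∈ pathEdges l, R e.1 e.2
  | [], _, e, he => by simp [pathEdges_nil] at he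
  | [a], _, e, he => by simp [pathEdges_single] at he
  | a :: b :: t, h, e, he => by
    rw [pathEdges_cons2, List.mem_cons] at he
    rcases he with rfl | he
    · exact (List.isChain_cons_cons.1 h).1
    · exact pathEdges_mem (List.isChain_cons_cons.1 h).2 e he

lemma cross_parity (S : Finset V) : ∀ (l : List V) (a : V),
    Multiset.countP (fun e : V × V => e.1 ∈ S ∧ e.2 ∉ S) (pathEdges (a :: l))
      + (if a ∈ S then 0 else 1)
    = Multiset.countP (fun e : V × V => e.2 ∈ S ∧ e.1 ∉ S) (pathEdges (a :: l))
      + (if (a :: l).getLast (by simp) ∈ S then 0 else 1)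
  | [], a => by simp [pathEdges_single]; exact if_congr Iff.rfl rfl rfl
  | b :: t, a => by
    have IH := cross_parity S t b
    rw [pathEdges_cons2] at *
    have hlast : (a :: b :: t).getLast (by simp) = (b :: t).getLast (by simp) := by
      simp [List.getLast_cons]
    rw [hlast]
    push_cast [Multiset.countP_cons]
    by_cases ha : a ∈ S <;> by_cases hb : b ∈ S <;> simp [ha, hb] at IH ⊢ <;> omega

open Classical in
lemma step_lemma (G G' : Multiset (V × V)) (u : V) (l : List V)
    (S T : Finset V) (hu : u ∈ S) (hT : ∀ v : V, v ∈ T ↔ v ∉ S)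
    (hp : IsSimplePathFrom G u l)
    (hs : G' = (G - (pathEdges l : Multiset (V × V))) +
      ((pathEdges l).map Prod.swap : Multiset (V × V))) :
    crossCount G' S + (if (∃ t ∈ T, l.getLast? = some t) then 1 else 0)
      = crossCount G S := by
  obtain ⟨hne, hhead, hnd, hch⟩ := hp
  obtain ⟨a, l, rfl⟩ := List.exists_cons_of_ne_nil hne
  have ha : a = u := by simpa using hhead
  subst ha
  set pe : Multiset (V × V) := (pathEdges (a :: l) : Multiset (V × V)) with hpe
  have hle : pe ≤ G := by
    rw [Multiset.le_iff_subset (by exact_mod_cast pathEdges_nodup hnd)]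
    intro e he
    have := pathEdges_mem hch e (by exact_mod_cast he)
    simpa using this
  have hsplit : G = (G - pe) + pe := (tsub_add_cancel_of_le hle).symm
  have hlast : (∃ t ∈ T, (a :: l).getLast? = some t) ↔
      (a :: l).getLast (by simp) ∉ S := by
    rw [List.getLast?_eq_getLast (by simp)]
    simp only [Option.some_inj]
    constructor
    · rintro ⟨t, ht, rfl⟩
      exact (hT _).1 ht
    · intro h
      exact ⟨_, (hT _).2 h, rfl⟩
  have key := cross_parity S l a
  unfold crossCount
  rw [hs, Multiset.countP_add]
  conv_rhs => rw [hsplit, Multiset.countP_add]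
  have hmap : Multiset.countP (fun e : V × V => e.1 ∈ S ∧ e.2 ∉ S) (pe.map Prod.swap)
      = Multiset.countP (fun e : V × V => e.2 ∈ S ∧ e.1 ∉ S) pe := by
    rw [Multiset.countP_map, Multiset.countP_eq_card_filter]
    rfl
  rw [show ((List.map Prod.swap (pathEdges (a :: l)) : List (V × V)) : Multiset (V × V))
    = pe.map Prod.swap from (Multiset.map_coe _ _).symm, hmap]
  rw [← hpe, if_pos hu] at key
  by_cases h : (a :: l).getLast (by simp) ∈ S
  · rw [if_pos h] at key
    rw [if_neg (fun he => (hlast.1 he) h)]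
    omega
  · rw [if_neg h] at key
    rw [if_pos (hlast.2 h)]
    omega


set_option maxHeartbeats 800000 in
open Classical in
theorem stmt12 (E : Multiset (V × V)) (u : V) (i : ℕ)
    (Gseq : ℕ → Multiset (V × V)) (P : ℕ → List V)
    (S T : Finset V) (hu : u ∈ S) (hT : ∀ v : V, v ∈ T ↔ v ∉ S)
    (hG1 : Gseq 1 = E)
    (hpath : ∀ j, 1 ≤ j → j ≤ i → IsSimplePathFrom (Gseq j) u (P j))
    (hstep : ∀ j, 1 ≤ j → j ≤ i →
      Gseq (j + 1) =
        (Gseq j - (pathEdges (P j) : Multiset (V × V))) +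
          ((pathEdges (P j)).map Prod.swap : Multiset (V × V)))
    (k : ℕ)
    (hk : k = Set.ncard {j : ℕ | 1 ≤ j ∧ j ≤ i ∧
      ∃ t ∈ T, (P j).getLast? = some t}) :
    crossCount (Gseq (i + 1)) S + k = crossCount E S := by
  have key : ∀ n, (∀ j, 1 ≤ j → j ≤ n → IsSimplePathFrom (Gseq j) u (P j)) →
      (∀ j, 1 ≤ j → j ≤ n → Gseq (j + 1) =
        (Gseq j - (pathEdges (P j) : Multiset (V × V))) +
          ((pathEdges (P j)).map Prod.swap : Multiset (V × V))) →
      crossCount (Gseq (n + 1)) S +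
        ((Finset.Icc 1 n).filter (fun j => ∃ t ∈ T, (P j).getLast? = some t)).card
        = crossCount E S := by
    intro n
    induction n with
    | zero => intro _ _; simp [hG1]
    | succ m ih =>
      intro hp hs
      have h1 := ih (fun j a b => hp j a (by omega)) (fun j a b => hs j a (by omega))
      have h2 := step_lemma (Gseq (m + 1)) (Gseq (m + 1 + 1)) u (P (m + 1)) S T hu hT
        (hp (m + 1) (by omega) (by omega)) (hs (m + 1) (by omega) (le_refl _))
      rw [← Finset.insert_Icc_right_eq_Icc_add_one (by omega), Finset.filter_insert]
      by_cases hq : ∃ t ∈ T, (P (m + 1)).getLast? = some t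
      · rw [if_pos hq, Finset.card_insert_of_notMem (by simp)]
        rw [if_pos hq] at h2
        omega
      · rw [if_neg hq]
        rw [if_neg hq] at h2
        omega
  have hset : {j : ℕ | 1 ≤ j ∧ j ≤ i ∧ ∃ t ∈ T, (P j).getLast? = some t}
      = ↑((Finset.Icc 1 i).filter (fun j => ∃ t ∈ T, (P j).getLast? = some t)) := by
    ext j
    simp [Finset.mem_Icc, and_assoc]
  rw [hk, hset, Set.ncard_coe_finset]
  exact key i hpath hstep
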